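/- arXiv:2006.13820 — 9 statements merged into one kernel-verified Lean document; each statement's English description precedes it below -/
import Mathlib

section
/- Let B ∈ ℝ^{n×(m−p)}, C ∈ ℝ^{n×p}, x₀, x_goal ∈ ℝⁿ, ε ≥ 0 and T > 0. The target ball G = {x ∈ ℝⁿ : ‖x − x_goal‖ ≤ ε} is resiliently reachable at time T from x₀ (i.e., for every measurable w : [0,T] → ℝᵖ with ∫₀ᵀ‖w(t)‖²dt ≤ 1 there exists a measurable u : [0,T] → ℝ^{m−p} with ∫₀ᵀ‖u(t)‖²dt ≤ 1 such that ‖x₀ + ∫₀ᵀ(Bu(t) + Cw(t))dt − x_goal‖ ≤ ε) if and only if max over unit vectors h ∈ ℝⁿ of ( ⟨h, x₀ − x_goal⟩ − √T·‖Bᵀh‖ + √T·‖Cᵀh‖ ) is at most ε. -/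
open MeasureTheory Matrix

/-- Euclidean norm of a vector in `ℝ^k`. -/
noncomputable def eNorm {k : ℕ} (v : Fin k → ℝ) : ℝ := Real.sqrt (∑ i, (v i) ^ 2)

/-- A square-integrable signal on `[0,T]` with `L²` norm at most `1`. -/
def Admissible {k : ℕ} (T : ℝ) (f : ℝ → Fin k → ℝ) : Prop :=
  Measurable f ∧ IntegrableOn (fun t => (eNorm (f t)) ^ 2) (Set.Ioc 0 T) ∧
    (∫ t in Set.Ioc (0 : ℝ) T, (eNorm (f t)) ^ 2) ≤ 1

/-- The target ball of center `xgoal` and radius `ε` is resiliently reachable at time `T`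
from `x₀` for the driftless system `ẋ = Bu + Cw`. -/
def ResilientlyReachableAt {n q p : ℕ} (B : Matrix (Fin n) (Fin q) ℝ)
    (C : Matrix (Fin n) (Fin p) ℝ) (x₀ xgoal : Fin n → ℝ) (ε T : ℝ) : Prop :=
  ∀ w : ℝ → Fin p → ℝ, Admissible T w →
    ∃ u : ℝ → Fin q → ℝ, Admissible T u ∧
      eNorm ((x₀ + ∫ t in Set.Ioc (0 : ℝ) T, (B.mulVec (u t) + C.mulVec (w t))) - xgoal) ≤ ε

noncomputable abbrev toE {k : ℕ} (v : Fin k → ℝ) : EuclideanSpace ℝ (Fin k) :=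
  (WithLp.equiv 2 _).symm v

lemma eNorm_eq {k : ℕ} (v : Fin k → ℝ) : eNorm v = ‖toE v‖ := by
  rw [EuclideanSpace.norm_eq, eNorm]
  congr 1; apply Finset.sum_congr rfl; intro i _
  rw [Real.norm_eq_abs, sq_abs]; rfl

lemma eNorm_nonneg {k : ℕ} (v : Fin k → ℝ) : 0 ≤ eNorm v := Real.sqrt_nonneg _

lemma dot_eq_inner {k : ℕ} (v w : Fin k → ℝ) : v ⬝ᵥ w = inner ℝ (toE v) (toE w) := by
  rw [PiLp.inner_apply]; simp [dotProduct, mul_comm]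

lemma eNorm_smul {k : ℕ} (a : ℝ) (v : Fin k → ℝ) : eNorm (a • v) = |a| * eNorm v := by
  rw [eNorm_eq, eNorm_eq v, show toE (a • v) = a • toE v from rfl, norm_smul, Real.norm_eq_abs]

lemma dot_self_eq {k : ℕ} (v : Fin k → ℝ) : v ⬝ᵥ v = eNorm v ^ 2 := by
  rw [dot_eq_inner, eNorm_eq, real_inner_self_eq_norm_sq]

lemma tdot {n q : ℕ} (B : Matrix (Fin n) (Fin q) ℝ) (h : Fin n → ℝ) (z : Fin q → ℝ) :
    (Bᵀ.mulVec h) ⬝ᵥ z = h ⬝ᵥ (B.mulVec z) := by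
  rw [Matrix.dotProduct_mulVec, Matrix.mulVec_transpose]

lemma dot_le_eNorm_mul {k : ℕ} (v w : Fin k → ℝ) : v ⬝ᵥ w ≤ eNorm v * eNorm w := by
  rw [dot_eq_inner, eNorm_eq, eNorm_eq]; exact real_inner_le_norm _ _

lemma neg_eNorm_mul_le_dot {k : ℕ} (v w : Fin k → ℝ) : -(eNorm v * eNorm w) ≤ v ⬝ᵥ w := by
  rw [dot_eq_inner, eNorm_eq, eNorm_eq]
  have := abs_real_inner_le_norm (toE v) (toE w)
  rw [abs_le] at this; exact this.1

lemma core {n q : ℕ} (B : Matrix (Fin n) (Fin q) ℝ) (v : Fin n → ℝ) (r ε : ℝ)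
    (hr : 0 ≤ r) (hε : 0 ≤ ε)
    (H : ∀ h : Fin n → ℝ, eNorm h = 1 → h ⬝ᵥ v - r * eNorm (Bᵀ.mulVec h) ≤ ε) :
    ∃ η : Fin q → ℝ, eNorm η ≤ r ∧ eNorm (v + B.mulVec η) ≤ ε := by
  classical
  set L : EuclideanSpace ℝ (Fin q) →ₗ[ℝ] EuclideanSpace ℝ (Fin n) := (WithLp.linearEquiv 2 ℝ (Fin n → ℝ)).symm.toLinearMap ∘ₗ Matrix.mulVecLin B ∘ₗ
    (WithLp.linearEquiv 2 ℝ (Fin q → ℝ)).toLinearMap with hL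
  have hLc : Continuous L := L.continuous_of_finiteDimensional
  set K : Set (EuclideanSpace ℝ (Fin q)) := Metric.closedBall 0 r with hK
  have hKc : IsCompact K := isCompact_closedBall 0 r
  have hKne : K.Nonempty := ⟨0, by simp [hK, hr]⟩
  have hf : ContinuousOn (fun η => ‖toE v + L η‖) K :=
    (continuous_norm.comp (continuous_const.add hLc)).continuousOn
  obtain ⟨η₀, hη₀K, hmin⟩ := hKc.exists_isMinOn hKne hf
  set y : EuclideanSpace ℝ (Fin n) := toE v + L η₀ with hy
  by_cases hm : ‖y‖ ≤ ε
  · refine ⟨η₀, ?_, ?_⟩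
    · have h1 := Metric.mem_closedBall.mp hη₀K
      rw [dist_zero_right] at h1
      rw [eNorm_eq]; exact h1
    · rw [eNorm_eq]; exact hm
  push_neg at hm
  exfalso
  have hm0 : 0 < ‖y‖ := lt_of_le_of_lt hε hm
  clear_value y
  have varin : ∀ z ∈ K, 0 ≤ (inner ℝ y (L z - L η₀) : ℝ) := by
    intro z hz
    set d : EuclideanSpace ℝ (Fin n) := L z - L η₀ with hd
    clear_value d
    have key : ∀ t : ℝ, t ∈ Set.Ioc (0:ℝ) 1 → 0 ≤ 2 * (inner ℝ y d : ℝ) + t * ‖d‖ ^ 2 := by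
      intro t ht
      have hmem : η₀ + t • (z - η₀) ∈ K := by
        have h2 := (convex_closedBall (0 : EuclideanSpace ℝ (Fin q)) r) hη₀K hz
          (by linarith [ht.2, ht.1.le] : (0:ℝ) ≤ 1 - t) ht.1.le (by ring)
        rw [hK]; convert h2 using 1
        module
      have hle : ‖y‖ ≤ ‖y + t • d‖ := by
        have h2 := hmin hmem
        simp only [Set.mem_setOf_eq] at h2
        calc ‖y‖ ≤ ‖toE v + L (η₀ + t • (z - η₀))‖ := by rw [hy]; exact h2
          _ = ‖y + t • d‖ := by
              rw [hy, hd]; congr 1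
              rw [map_add, _root_.map_smul, map_sub]; abel
      have expand : ‖y + t • d‖ ^ 2 = ‖y‖ ^ 2 + 2 * (t * inner ℝ y d) + (t * ‖d‖) ^ 2 := by
        rw [norm_add_sq_real, real_inner_smul_right, norm_smul, Real.norm_eq_abs,
          abs_of_pos ht.1]
      have hsq : ‖y‖ ^ 2 ≤ ‖y + t • d‖ ^ 2 := pow_le_pow_left₀ (norm_nonneg _) hle 2
      rw [expand] at hsq
      have ht0 : 0 < t := ht.1
      nlinarith
    by_contra hneg
    push_neg at hneg
    set a : ℝ := -(inner ℝ y d : ℝ) with ha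
    have ha0 : 0 < a := by rw [ha]; linarith
    have ht : min 1 (a / (‖d‖ ^ 2 + 1)) ∈ Set.Ioc (0:ℝ) 1 :=
      ⟨lt_min one_pos (by positivity), min_le_left _ _⟩
    have hkey := key _ ht
    have h1 : min 1 (a / (‖d‖ ^ 2 + 1)) ≤ a / (‖d‖ ^ 2 + 1) := min_le_right _ _
    have h2 : (0:ℝ) < ‖d‖ ^ 2 + 1 := by positivity
    have h3 : min 1 (a / (‖d‖ ^ 2 + 1)) * ‖d‖ ^ 2 ≤ a := by
      calc min 1 (a / (‖d‖ ^ 2 + 1)) * ‖d‖ ^ 2 ≤ (a / (‖d‖ ^ 2 + 1)) * ‖d‖ ^ 2 :=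
            mul_le_mul_of_nonneg_right h1 (by positivity)
        _ ≤ a := by rw [div_mul_eq_mul_div, div_le_iff₀ h2]; nlinarith
    linarith
  set h : Fin n → ℝ := ‖y‖⁻¹ • (WithLp.equiv 2 _ y) with hh
  have hyh : toE h = ‖y‖⁻¹ • y := rfl
  have hh1 : eNorm h = 1 := by
    rw [eNorm_eq, hyh, norm_smul, Real.norm_eq_abs, abs_of_pos (inv_pos.mpr hm0),
      inv_mul_cancel₀ hm0.ne']
  have main : ∀ z : Fin q → ℝ, eNorm z ≤ r → ‖y‖ ≤ h ⬝ᵥ v + h ⬝ᵥ (B.mulVec z) := by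
    intro z hz
    have hzK : toE z ∈ K := by
      rw [hK, Metric.mem_closedBall, dist_zero_right, ← eNorm_eq]; exact hz
    have h1 := varin _ hzK
    have expand : h ⬝ᵥ v + h ⬝ᵥ (B.mulVec z)
        = (inner ℝ (toE h) y : ℝ) + inner ℝ (toE h) (L (toE z) - L η₀) := by
      rw [dot_eq_inner, dot_eq_inner]
      have hLz : toE (B.mulVec z) = L (toE z) := rfl
      have hveq : toE v + L (toE z) = y + (L (toE z) - L η₀) := by rw [hy]; abel
      rw [hLz, ← inner_add_right, hveq, inner_add_right]
    have hinner_y : (inner ℝ (toE h) y : ℝ) = ‖y‖ := by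
      rw [hyh, real_inner_smul_left, real_inner_self_eq_norm_sq, pow_two,
        ← mul_assoc, inv_mul_cancel₀ hm0.ne', one_mul]
    have hinner_d : (0:ℝ) ≤ inner ℝ (toE h) (L (toE z) - L η₀) := by
      rw [hyh, real_inner_smul_left]
      exact mul_nonneg (inv_pos.mpr hm0).le h1
    rw [expand, hinner_y]
    linarith
  set g : Fin q → ℝ := Bᵀ.mulVec h with hg
  set z : Fin q → ℝ := (-(r * (eNorm g)⁻¹)) • g with hz
  have hzr : eNorm z ≤ r := by
    rw [hz, eNorm_smul, abs_neg, abs_of_nonneg (mul_nonneg hr (inv_nonneg.mpr (eNorm_nonneg g)))]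
    by_cases hg0 : eNorm g = 0
    · rw [hg0]; simpa using hr
    · rw [mul_assoc, inv_mul_cancel₀ hg0, mul_one]
  have hdot : h ⬝ᵥ (B.mulVec z) = -(r * eNorm g) := by
    rw [← tdot, ← hg, hz, dotProduct_smul, dot_self_eq]
    by_cases hg0 : eNorm g = 0
    · rw [hg0]; simp
    · rw [smul_eq_mul]
      field_simp
  have := main z hzr
  rw [hdot] at this
  have hH := H h hh1
  rw [← hg] at hH
  linarith

lemma abs_apply_le_eNorm {k : ℕ} (v : Fin k → ℝ) (i : Fin k) : |v i| ≤ eNorm v := by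
  rw [eNorm, ← Real.sqrt_sq_eq_abs]
  exact Real.sqrt_le_sqrt (Finset.single_le_sum (fun j _ => sq_nonneg (v j)) (Finset.mem_univ i))

lemma eNorm_measurable {k : ℕ} {f : ℝ → Fin k → ℝ} (hf : Measurable f) :
    Measurable fun t => eNorm (f t) := by
  unfold eNorm
  exact Real.continuous_sqrt.measurable.comp
    (Finset.measurable_sum _ fun i _ => ((measurable_pi_apply i).comp hf).pow_const 2)

lemma admissible_integrableOn {k : ℕ} {T : ℝ} {f : ℝ → Fin k → ℝ} (hf : Admissible T f) :
    IntegrableOn f (Set.Ioc 0 T) ∧ IntegrableOn (fun t => eNorm (f t)) (Set.Ioc 0 T) := by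
  obtain ⟨hfm, hfi, -⟩ := hf
  have hμ : volume (Set.Ioc (0:ℝ) T) < ⊤ := measure_Ioc_lt_top
  have hg : IntegrableOn (fun t => 1 + eNorm (f t) ^ 2) (Set.Ioc 0 T) :=
    (integrableOn_const hμ.ne).add hfi
  have hbound : ∀ t, eNorm (f t) ≤ 1 + eNorm (f t) ^ 2 := by
    intro t; nlinarith [sq_nonneg (eNorm (f t) - 1), eNorm_nonneg (f t)]
  constructor
  · refine hg.mono' (hfm.aestronglyMeasurable.restrict) ?_
    filter_upwards with t
    refine (pi_norm_le_iff_of_nonneg (by positivity)).mpr fun i => ?_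
    exact le_trans (by rw [Real.norm_eq_abs]; exact abs_apply_le_eNorm (f t) i) (hbound t)
  · refine hg.mono' ((eNorm_measurable hfm).aestronglyMeasurable.restrict) ?_
    filter_upwards with t
    rw [Real.norm_eq_abs, abs_of_nonneg (eNorm_nonneg _)]
    exact hbound t

lemma cauchy_schwarz_T {T : ℝ} (hT : 0 < T) {g : ℝ → ℝ} (hg0 : ∀ t, 0 ≤ g t)
    (hgi : IntegrableOn g (Set.Ioc 0 T)) (hg2 : IntegrableOn (fun t => g t ^ 2) (Set.Ioc 0 T))
    (hg21 : (∫ t in Set.Ioc (0:ℝ) T, g t ^ 2) ≤ 1) :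
    (∫ t in Set.Ioc (0:ℝ) T, g t) ≤ Real.sqrt T := by
  set s := Set.Ioc (0:ℝ) T
  set I := ∫ t in s, g t with hI
  have hI0 : 0 ≤ I := setIntegral_nonneg measurableSet_Ioc fun t _ => hg0 t
  set c := I / T with hc
  have hμ : (volume s).toReal = T := by
    rw [show s = Set.Ioc (0:ℝ) T from rfl, Real.volume_Ioc, sub_zero, ENNReal.toReal_ofReal hT.le]
  have hconst : IntegrableOn (fun _ : ℝ => c ^ 2) s :=
    integrableOn_const measure_Ioc_lt_top.ne
  have hexp : (∫ t in s, (g t - c) ^ 2) = (∫ t in s, g t ^ 2) - 2 * c * I + c ^ 2 * T := by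
    have : (fun t => (g t - c) ^ 2) = fun t => g t ^ 2 - 2 * c * g t + c ^ 2 := by
      funext t; ring
    have e2 : IntegrableOn (fun t => 2 * c * g t) s := hgi.const_mul (2 * c)
    have e1 : IntegrableOn (fun t => g t ^ 2 - 2 * c * g t) s := hg2.sub e2
    rw [this, integral_add e1 hconst, integral_sub hg2 e2, MeasureTheory.integral_const_mul, integral_const,
      measureReal_restrict_apply_univ, measureReal_def, hμ, ← hI]
    simp only [smul_eq_mul]
    field_simp
  have hnn : 0 ≤ (∫ t in s, (g t - c) ^ 2) := setIntegral_nonneg measurableSet_Ioc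
    fun t _ => sq_nonneg _
  rw [hexp, hc] at hnn
  have hkey : I ^ 2 ≤ T := by
    have h2 : (∫ t in s, g t ^ 2) - I ^ 2 / T ≥ 0 := by
      have : 2 * (I / T) * I - (I / T) ^ 2 * T = I ^ 2 / T := by field_simp; ring
      linarith [hnn, this]
    have h3 : I ^ 2 / T ≤ 1 := le_trans (by linarith) hg21
    exact (div_le_one hT).mp h3
  nlinarith [Real.sq_sqrt hT.le, Real.sqrt_nonneg T, hI0]

lemma integral_toE {k : ℕ} (f : ℝ → Fin k → ℝ) (s : Set ℝ) :
    toE (∫ t in s, f t) = ∫ t in s, toE (f t) :=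
  ((PiLp.continuousLinearEquiv 2 ℝ (fun _ : Fin k => ℝ)).symm.integral_comp_comm f).symm

lemma admissible_eNorm_integral_le {k : ℕ} {T : ℝ} (hT : 0 < T) {f : ℝ → Fin k → ℝ}
    (hf : Admissible T f) : eNorm (∫ t in Set.Ioc (0:ℝ) T, f t) ≤ Real.sqrt T := by
  obtain ⟨hfint, hgint⟩ := admissible_integrableOn hf
  rw [eNorm_eq, integral_toE]
  calc ‖∫ t in Set.Ioc (0:ℝ) T, toE (f t)‖ ≤ ∫ t in Set.Ioc (0:ℝ) T, ‖toE (f t)‖ :=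
        norm_integral_le_integral_norm _
    _ = ∫ t in Set.Ioc (0:ℝ) T, eNorm (f t) := by
        simp_rw [← eNorm_eq]
    _ ≤ Real.sqrt T := cauchy_schwarz_T hT (fun t => eNorm_nonneg _) hgint hf.2.1 hf.2.2

lemma mulVec_integral {n k : ℕ} (A : Matrix (Fin n) (Fin k) ℝ) {f : ℝ → Fin k → ℝ} {s : Set ℝ}
    (hf : IntegrableOn f s) :
    (∫ t in s, A.mulVec (f t)) = A.mulVec (∫ t in s, f t) :=
  (LinearMap.toContinuousLinearMap (Matrix.mulVecLin A)).integral_comp_comm hf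

lemma integral_const_Ioc {k : ℕ} {T : ℝ} (hT : 0 < T) (c : Fin k → ℝ) :
    (∫ _ in Set.Ioc (0:ℝ) T, c) = T • c := by
  rw [integral_const, measureReal_restrict_apply_univ, measureReal_def, Real.volume_Ioc, sub_zero,
    ENNReal.toReal_ofReal hT.le]

lemma admissible_const {k : ℕ} {T : ℝ} (hT : 0 < T) (c : Fin k → ℝ)
    (hc : eNorm c ≤ Real.sqrt T) :
    Admissible T (fun _ => T⁻¹ • c) ∧ (∫ _ in Set.Ioc (0:ℝ) T, T⁻¹ • c) = c := by
  have hnorm : eNorm (T⁻¹ • c) = T⁻¹ * eNorm c := by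
    rw [eNorm_eq, show toE (T⁻¹ • c) = T⁻¹ • toE c from rfl, norm_smul, Real.norm_eq_abs,
      abs_of_pos (inv_pos.mpr hT), eNorm_eq]
  have hc2 : eNorm c ^ 2 ≤ T := by
    nlinarith [Real.sq_sqrt hT.le, eNorm_nonneg c, Real.sqrt_nonneg T]
  refine ⟨⟨measurable_const, integrableOn_const measure_Ioc_lt_top.ne, ?_⟩, ?_⟩
  · rw [integral_const, measureReal_restrict_apply_univ, measureReal_def, Real.volume_Ioc, sub_zero,
      ENNReal.toReal_ofReal hT.le, hnorm, smul_eq_mul]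
    rw [mul_pow]
    have : T * (T⁻¹ ^ 2 * eNorm c ^ 2) = eNorm c ^ 2 / T := by field_simp
    rw [this]
    rw [div_le_one hT]
    exact hc2
  · rw [integral_const_Ioc hT, smul_smul, mul_inv_cancel₀ hT.ne', one_smul]

theorem resiliently_reachable_at_iff {n m p : ℕ} (B : Matrix (Fin n) (Fin (m - p)) ℝ)
    (C : Matrix (Fin n) (Fin p) ℝ) (x₀ xgoal : Fin n → ℝ) (ε T : ℝ)
    (hε : 0 ≤ ε) (hT : 0 < T) :
    ResilientlyReachableAt B C x₀ xgoal ε T ↔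
      ∀ h : Fin n → ℝ, eNorm h = 1 →
        h ⬝ᵥ (x₀ - xgoal) - Real.sqrt T * eNorm (Bᵀ.mulVec h)
          + Real.sqrt T * eNorm (Cᵀ.mulVec h) ≤ ε := by
  constructor
  · intro RR h hh1
    set g : Fin p → ℝ := Cᵀ.mulVec h with hg
    set ξ : Fin p → ℝ := (Real.sqrt T * (eNorm g)⁻¹) • g with hξ
    have hξn : eNorm ξ ≤ Real.sqrt T := by
      rw [hξ, eNorm_smul,
        abs_of_nonneg (mul_nonneg (Real.sqrt_nonneg T) (inv_nonneg.mpr (eNorm_nonneg g)))]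
      by_cases h0 : eNorm g = 0
      · rw [h0]; simpa using Real.sqrt_nonneg T
      · rw [mul_assoc, inv_mul_cancel₀ h0, mul_one]
    obtain ⟨hwadm, hwint⟩ := admissible_const hT ξ hξn
    obtain ⟨u, huadm, hreach⟩ := RR _ hwadm
    obtain ⟨huint, -⟩ := admissible_integrableOn huadm
    set η : Fin (m - p) → ℝ := ∫ t in Set.Ioc (0:ℝ) T, u t with hη
    have hηn : eNorm η ≤ Real.sqrt T := admissible_eNorm_integral_le hT huadm
    have hBu : IntegrableOn (fun t => B.mulVec (u t)) (Set.Ioc 0 T) :=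
      (LinearMap.toContinuousLinearMap (Matrix.mulVecLin B)).integrable_comp huint
    have hwconst : IntegrableOn (fun _ : ℝ => T⁻¹ • ξ) (Set.Ioc 0 T) :=
      integrableOn_const measure_Ioc_lt_top.ne
    have hCw : IntegrableOn (fun _ : ℝ => C.mulVec (T⁻¹ • ξ)) (Set.Ioc 0 T) :=
      integrableOn_const measure_Ioc_lt_top.ne
    have hint : (∫ t in Set.Ioc (0:ℝ) T, (B.mulVec (u t) + C.mulVec (T⁻¹ • ξ)))
        = B.mulVec η + C.mulVec ξ := by
      rw [integral_add hBu hCw, mulVec_integral B huint, mulVec_integral C hwconst, hwint, hη]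
    rw [hint] at hreach
    have hrearr : (x₀ + (B.mulVec η + C.mulVec ξ)) - xgoal
        = (x₀ - xgoal) + B.mulVec η + C.mulVec ξ := by abel
    rw [hrearr] at hreach
    have hCdot : h ⬝ᵥ C.mulVec ξ = Real.sqrt T * eNorm g := by
      rw [← tdot, ← hg, hξ, dotProduct_smul, dot_self_eq, smul_eq_mul]
      by_cases h0 : eNorm g = 0
      · rw [h0]; simp
      · field_simp
    have hBdot : -(Real.sqrt T * eNorm (Bᵀ.mulVec h)) ≤ h ⬝ᵥ B.mulVec η := by
      have h1 := neg_eNorm_mul_le_dot (Bᵀ.mulVec h) η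
      rw [tdot] at h1
      have h2 : eNorm (Bᵀ.mulVec h) * eNorm η ≤ eNorm (Bᵀ.mulVec h) * Real.sqrt T :=
        mul_le_mul_of_nonneg_left hηn (eNorm_nonneg _)
      have h3 : eNorm (Bᵀ.mulVec h) * Real.sqrt T = Real.sqrt T * eNorm (Bᵀ.mulVec h) :=
        mul_comm _ _
      linarith
    have hdotle : h ⬝ᵥ ((x₀ - xgoal) + B.mulVec η + C.mulVec ξ)
        ≤ eNorm ((x₀ - xgoal) + B.mulVec η + C.mulVec ξ) := by
      have := dot_le_eNorm_mul h ((x₀ - xgoal) + B.mulVec η + C.mulVec ξ)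
      rwa [hh1, one_mul] at this
    rw [dotProduct_add, dotProduct_add] at hdotle
    linarith
  · intro cond w hw
    obtain ⟨hwint, -⟩ := admissible_integrableOn hw
    set ξ : Fin p → ℝ := ∫ t in Set.Ioc (0:ℝ) T, w t with hξ
    have hξn : eNorm ξ ≤ Real.sqrt T := admissible_eNorm_integral_le hT hw
    set v : Fin n → ℝ := (x₀ - xgoal) + C.mulVec ξ with hv
    have H : ∀ h : Fin n → ℝ, eNorm h = 1 →
        h ⬝ᵥ v - Real.sqrt T * eNorm (Bᵀ.mulVec h) ≤ ε := by
      intro h hh1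
      have hdC : h ⬝ᵥ C.mulVec ξ ≤ Real.sqrt T * eNorm (Cᵀ.mulVec h) := by
        rw [← tdot]
        calc (Cᵀ.mulVec h) ⬝ᵥ ξ ≤ eNorm (Cᵀ.mulVec h) * eNorm ξ := dot_le_eNorm_mul _ _
          _ ≤ eNorm (Cᵀ.mulVec h) * Real.sqrt T :=
              mul_le_mul_of_nonneg_left hξn (eNorm_nonneg _)
          _ = Real.sqrt T * eNorm (Cᵀ.mulVec h) := mul_comm _ _
      have hc := cond h hh1
      rw [hv, dotProduct_add]
      linarith
    obtain ⟨η, hηn, hηr⟩ := core B v (Real.sqrt T) ε (Real.sqrt_nonneg T) hε H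
    obtain ⟨huadm, huint_eq⟩ := admissible_const hT η hηn
    refine ⟨fun _ => T⁻¹ • η, huadm, ?_⟩
    have huconst : IntegrableOn (fun _ : ℝ => T⁻¹ • η) (Set.Ioc 0 T) :=
      integrableOn_const measure_Ioc_lt_top.ne
    have hBu : IntegrableOn (fun _ : ℝ => B.mulVec (T⁻¹ • η)) (Set.Ioc 0 T) :=
      integrableOn_const measure_Ioc_lt_top.ne
    have hCw : IntegrableOn (fun t => C.mulVec (w t)) (Set.Ioc 0 T) :=
      (LinearMap.toContinuousLinearMap (Matrix.mulVecLin C)).integrable_comp hwint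
    have hint : (∫ t in Set.Ioc (0:ℝ) T, (B.mulVec (T⁻¹ • η) + C.mulVec (w t)))
        = B.mulVec η + C.mulVec ξ := by
      rw [integral_add hBu hCw, mulVec_integral B huconst, huint_eq,
        mulVec_integral C hwint, hξ]
    rw [hint]
    have hrearr : (x₀ + (B.mulVec η + C.mulVec ξ)) - xgoal = v + B.mulVec η := by
      rw [hv]; abel
    rw [hrearr]
    exact hηr
end

section
/- Let B̄ ∈ ℝ^{n×m} with m ≤ n. Then for every column C of B̄, with B denoting the matrix of the remaining m−1 columns, the matrix F = BBᵀ − CCᵀ is not positive definite. (Consequently, a 1-resilient driftless system must be overactuated, i.e., must satisfy m > n.) -/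
open Matrix

theorem not_posDef_of_not_overactuated {n m : ℕ} (Bbar : Matrix (Fin n) (Fin (m + 1)) ℝ)
    (hmn : m + 1 ≤ n) (j : Fin (m + 1)) :
    ¬ (Bbar.submatrix id j.succAbove * (Bbar.submatrix id j.succAbove)ᵀ -
        vecMulVec (fun i => Bbar i j) (fun i => Bbar i j)).PosDef := by
  intro hPD
  set B := Bbar.submatrix id j.succAbove with hB
  set C : Fin n → ℝ := fun i => Bbar i j with hC
  have hni : ¬ Function.Injective Bᵀ.mulVecLin := by
    intro hinj
    have h := LinearMap.finrank_le_finrank_of_injective hinj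
    simp [Module.finrank_fin_fun] at h
    omega
  obtain ⟨a, b, hab, hne⟩ := Function.not_injective_iff.mp hni
  set x := a - b with hx
  have hx0 : x ≠ 0 := sub_ne_zero_of_ne hne
  have hker : Bᵀ.mulVec x = 0 := by
    have h0 : Bᵀ.mulVecLin x = 0 := by rw [hx, map_sub, hab, sub_self]
    simpa only [mulVecLin_apply] using h0
  have hpos := hPD.dotProduct_mulVec_pos hx0
  have hmv : (B * Bᵀ - vecMulVec C C).mulVec x = -(C ⬝ᵥ x) • C := by
    rw [sub_mulVec, ← mulVec_mulVec, hker, mulVec_zero]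
    ext i
    simp only [vecMulVec_apply, mulVec, dotProduct, zero_sub, Pi.neg_apply, Pi.smul_apply,
      smul_eq_mul, Finset.mul_sum, neg_mul]
    rw [Finset.sum_mul]
    exact neg_inj.2 (Finset.sum_congr rfl fun k _ => by ring)
  rw [hmv] at hpos
  simp only [star_trivial, dotProduct_smul, smul_eq_mul, neg_mul] at hpos
  rw [dotProduct_comm x C] at hpos
  nlinarith [sq_nonneg (C ⬝ᵥ x)]
end

section
/- Let B̄ ∈ ℝ^{n×m} with columns C₁, …, C_m. If for every j ∈ {1,…,m} the matrix F_j := B̄B̄ᵀ − 2CⱼCⱼᵀ (equal to BBᵀ − CⱼCⱼᵀ where B is B̄ with column j removed) is positive definite, then m ≥ 2n + 1. (In other words, a 1-resilient control matrix in ℝⁿ must have at least 2n+1 columns.) -/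
open Matrix

private lemma vecMulVec_mulVec_aux {n : ℕ} (w v x : Fin n → ℝ) :
    vecMulVec w v *ᵥ x = (v ⬝ᵥ x) • w := by
  ext i
  simp only [mulVec, dotProduct, vecMulVec_apply, Pi.smul_apply, smul_eq_mul, Finset.sum_mul]
  exact Finset.sum_congr rfl fun k _ => by ring

theorem one_resilient_min_size {n m : ℕ} (Bbar : Matrix (Fin n) (Fin (m + 1)) ℝ)
    (hres : ∀ j : Fin (m + 1),
      (Bbar * Bbarᵀ -
        (2 : ℝ) • vecMulVec (fun i => Bbar i j) (fun i => Bbar i j)).PosDef) :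
    2 * n + 1 ≤ m + 1 := by
  by_contra hcon
  push_neg at hcon
  have hd : m + 1 ≤ 2 * n := by omega
  set M : Matrix (Fin n) (Fin n) ℝ := Bbar * Bbarᵀ with hMdef
  set C : Fin (m + 1) → (Fin n → ℝ) := fun j i => Bbar i j with hCdef
  -- key quadratic identity
  have key : ∀ (j : Fin (m + 1)) (x : Fin n → ℝ),
      x ⬝ᵥ ((M - (2 : ℝ) • vecMulVec (C j) (C j)) *ᵥ x)
        = x ⬝ᵥ (M *ᵥ x) - 2 * (C j ⬝ᵥ x) ^ 2 := by
    intro j x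
    rw [sub_mulVec, dotProduct_sub, smul_mulVec, vecMulVec_mulVec_aux,
      dotProduct_smul, dotProduct_smul]
    have : x ⬝ᵥ C j = C j ⬝ᵥ x := dotProduct_comm _ _
    simp [smul_eq_mul, this]
    ring
  -- M is positive definite
  have hMpd : M.PosDef := by
    rw [posDef_iff_dotProduct_mulVec]
    constructor
    · ext i k
      simp only [conjTranspose_apply, hMdef, Matrix.mul_apply, transpose_apply, star_trivial]
      exact Finset.sum_congr rfl fun j _ => by ring
    · intro x hx
      have h := (posDef_iff_dotProduct_mulVec.mp (hres ⟨0, Nat.succ_pos m⟩)).2 hx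
      rw [star_trivial] at h ⊢
      rw [key ⟨0, Nat.succ_pos m⟩ x] at h
      nlinarith [sq_nonneg (C ⟨0, Nat.succ_pos m⟩ ⬝ᵥ x)]
  have hdet : IsUnit M.det := hMpd.det_pos.ne'.isUnit
  have hinv : M⁻¹ * M = 1 := nonsing_inv_mul M hdet
  set g : Fin (m + 1) → ℝ := fun j => C j ⬝ᵥ (M⁻¹ *ᵥ C j) with hgdef
  -- the g's sum to n
  have hsum : ∑ j, g j = (n : ℝ) := by
    have h1 : ∑ j, g j = ∑ j, ∑ i, ∑ k, Bbar i j * (M⁻¹ i k * Bbar k j) := by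
      simp [hgdef, dotProduct, mulVec, hCdef, Finset.mul_sum]
    have h2 : ∑ i, (M⁻¹ * M) i i = ∑ i, ∑ k, ∑ j, M⁻¹ i k * (Bbar k j * Bbar i j) := by
      simp [Matrix.mul_apply, hMdef, transpose_apply, Finset.mul_sum]
    have h3 : ∑ i, (M⁻¹ * M) i i = (n : ℝ) := by
      rw [hinv]
      simp [Matrix.one_apply]
    rw [h1, Finset.sum_comm]
    rw [h2] at h3
    rw [← h3]
    refine Finset.sum_congr rfl fun i _ => ?_
    rw [Finset.sum_comm]
    exact Finset.sum_congr rfl fun k _ => Finset.sum_congr rfl fun j _ => by ring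
  -- some g j is at least 1/2
  have hex : ∃ j, (1 : ℝ) / 2 ≤ g j := by
    by_contra hno
    push_neg at hno
    have hlt : ∑ j, g j < ∑ _j : Fin (m + 1), (1 : ℝ) / 2 :=
      Finset.sum_lt_sum_of_nonempty Finset.univ_nonempty fun j _ => hno j
    rw [hsum, Finset.sum_const, Finset.card_univ, Fintype.card_fin] at hlt
    have hcast : (m + 1 : ℝ) ≤ 2 * n := by exact_mod_cast hd
    simp only [nsmul_eq_mul] at hlt
    push_cast at hlt
    nlinarith
  obtain ⟨j, hj⟩ := hex
  set x : Fin n → ℝ := M⁻¹ *ᵥ C j with hxdef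
  have hCx : C j ⬝ᵥ x = g j := rfl
  have hxC : x ⬝ᵥ C j = g j := by rw [dotProduct_comm]
  have hMx : M *ᵥ x = C j := by
    rw [hxdef, mulVec_mulVec, mul_nonsing_inv M hdet, one_mulVec]
  have hxne : x ≠ 0 := by
    intro h0
    rw [h0, dotProduct_zero] at hCx
    rw [← hCx] at hj
    norm_num at hj
  have hpos := (posDef_iff_dotProduct_mulVec.mp (hres j)).2 hxne
  rw [star_trivial, key j x, hMx, hxC, hCx] at hpos
  nlinarith
end

section
/- Let n ∈ ℕ, n ≥ 1, and let B̄ = [I_n I_n D] ∈ ℝ^{n×(2n+1)} where D = (1/√n)·(1, …, 1)ᵀ ∈ ℝⁿ. Then for every j ∈ {1,…,2n+1}, letting C ∈ ℝⁿ be the j-th column of B̄ and B ∈ ℝ^{n×2n} the remaining columns, one has ‖Cᵀh‖ < ‖Bᵀh‖ for every unit vector h ∈ ℝⁿ (equivalently, BBᵀ − CCᵀ is positive definite); hence B̄ is 1-resilient. -/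
open Matrix

/-- The `n × (2n+1)` control matrix `[Iₙ Iₙ D]` with `D = (1/√n)(1,…,1)ᵀ`. -/
noncomputable def BbarTwo (n : ℕ) : Matrix (Fin n) (Fin (2 * n + 1)) ℝ :=
  Matrix.of fun i j =>
    if j.val < n then (if i.val = j.val then 1 else 0)
    else if j.val < 2 * n then (if i.val = j.val - n then 1 else 0)
    else 1 / Real.sqrt n

lemma dot_col (n : ℕ) (hn : 0 < n) (h : Fin n → ℝ) (j' : Fin (2 * n + 1)) :
    (∑ i, BbarTwo n i j' * h i) =
      if j'.val < 2 * n then h ⟨j'.val % n, Nat.mod_lt _ hn⟩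
      else (1 / Real.sqrt n) * ∑ i, h i := by
  by_cases h1 : j'.val < n
  · rw [if_pos (by omega)]
    have hkey : ∀ i : Fin n, (i.val = j'.val) ↔ (i = ⟨j'.val % n, Nat.mod_lt _ hn⟩) := by
      intro i
      simp [Fin.ext_iff, Nat.mod_eq_of_lt h1]
    simp_rw [BbarTwo, Matrix.of_apply, if_pos h1, hkey, ite_mul, one_mul, zero_mul]
    simp
  · by_cases h2 : j'.val < 2 * n
    · rw [if_pos h2]
      have hmod : j'.val % n = j'.val - n := by
        rw [Nat.mod_eq_sub_mod (by omega), Nat.mod_eq_of_lt (by omega)]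
      have hkey : ∀ i : Fin n, (i.val = j'.val - n) ↔ (i = ⟨j'.val % n, Nat.mod_lt _ hn⟩) := by
        intro i
        simp [Fin.ext_iff, hmod]
      simp_rw [BbarTwo, Matrix.of_apply, if_neg h1, if_pos h2, hkey, ite_mul, one_mul, zero_mul]
      simp
    · rw [if_neg h2]
      simp_rw [BbarTwo, Matrix.of_apply, if_neg h1, if_neg h2]
      rw [Finset.mul_sum]

lemma total_sum (n : ℕ) (hn : 0 < n) (h : Fin n → ℝ) :
    ∑ j' : Fin (2 * n + 1), (∑ i, BbarTwo n i j' * h i) ^ 2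
      = 2 * (∑ i, h i ^ 2) + (∑ i, h i) ^ 2 / n := by
  set s : ℝ := ∑ i, h i with hs
  set F : ℕ → ℝ := fun x =>
    if x < 2 * n then (h ⟨x % n, Nat.mod_lt _ hn⟩) ^ 2 else ((1 / Real.sqrt n) * s) ^ 2 with hF
  have hFj : ∀ j' : Fin (2 * n + 1), (∑ i, BbarTwo n i j' * h i) ^ 2 = F j'.val := by
    intro j'
    rw [dot_col n hn h j', apply_ite (· ^ 2)]
  calc ∑ j' : Fin (2 * n + 1), (∑ i, BbarTwo n i j' * h i) ^ 2
      = ∑ j' : Fin (2 * n + 1), F j'.val := by simp_rw [hFj]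
    _ = ∑ x ∈ Finset.range (2 * n + 1), F x := Fin.sum_univ_eq_sum_range F (2 * n + 1)
    _ = ∑ x ∈ Finset.range (2 * n), F x + F (2 * n) := Finset.sum_range_succ F (2 * n)
    _ = 2 * (∑ i, h i ^ 2) + s ^ 2 / n := by
        have hlast : F (2 * n) = s ^ 2 / n := by
          have hn' : (0 : ℝ) < (n : ℝ) := by exact_mod_cast hn
          have hv : F (2 * n) = ((1 / Real.sqrt n) * s) ^ 2 := if_neg (lt_irrefl _)
          rw [hv, mul_pow, one_div, inv_pow, Real.sq_sqrt hn'.le]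
          ring
        have hsplit : ∑ x ∈ Finset.range (2 * n), F x = 2 * (∑ i, h i ^ 2) := by
          have h1 : ∑ x ∈ Finset.range n, F x + ∑ x ∈ Finset.Ico n (2 * n), F x
              = ∑ x ∈ Finset.range (2 * n), F x :=
            Finset.sum_range_add_sum_Ico F (by omega)
          have h2 : ∑ x ∈ Finset.range n, F x = ∑ i, h i ^ 2 := by
            rw [← Fin.sum_univ_eq_sum_range F n]
            refine Finset.sum_congr rfl fun i _ => ?_
            have hv : F (i : ℕ) = (h ⟨(i : ℕ) % n, Nat.mod_lt _ hn⟩) ^ 2 :=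
              if_pos (by omega : (i : ℕ) < 2 * n)
            rw [hv]
            have heq : (⟨(i : ℕ) % n, Nat.mod_lt _ hn⟩ : Fin n) = i := by
              ext
              simp [Nat.mod_eq_of_lt i.isLt]
            rw [heq]
          have h3 : ∑ x ∈ Finset.Ico n (2 * n), F x = ∑ i, h i ^ 2 := by
            rw [Finset.sum_Ico_eq_sum_range]
            have h2n : 2 * n - n = n := by omega
            rw [h2n, ← Fin.sum_univ_eq_sum_range (fun x => F (n + x)) n]
            refine Finset.sum_congr rfl fun i _ => ?_
            have hv : F (n + (i : ℕ)) = (h ⟨(n + (i : ℕ)) % n, Nat.mod_lt _ hn⟩) ^ 2 :=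
              if_pos (by omega : n + (i : ℕ) < 2 * n)
            rw [hv]
            have heq : (⟨(n + (i : ℕ)) % n, Nat.mod_lt _ hn⟩ : Fin n) = i := by
              ext
              simp [Nat.add_mod_left, Nat.mod_eq_of_lt i.isLt]
            rw [heq]
          linarith
        rw [hlast, hsplit]

/-- Key strict inequality. -/
lemma key_lt (n : ℕ) (hn : 0 < n) (j : Fin (2 * n + 1)) (h : Fin n → ℝ) (hh : h ≠ 0) :
    2 * (∑ i, BbarTwo n i j * h i) ^ 2
      < ∑ j' : Fin (2 * n + 1), (∑ i, BbarTwo n i j' * h i) ^ 2 := by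
  have hn' : (0 : ℝ) < (n : ℝ) := by exact_mod_cast hn
  obtain ⟨i0, hi0⟩ : ∃ i, h i ≠ 0 := by
    by_contra hc
    push_neg at hc
    exact hh (funext hc)
  have hS2pos : 0 < ∑ i, h i ^ 2 :=
    Finset.sum_pos' (fun i _ => sq_nonneg _) ⟨i0, Finset.mem_univ _, by positivity⟩
  rw [total_sum n hn h, dot_col n hn h j]
  set s : ℝ := ∑ i, h i with hs
  by_cases hj : j.val < 2 * n
  · rw [if_pos hj]
    set k : Fin n := ⟨j.val % n, Nat.mod_lt _ hn⟩ with hk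
    by_cases hrest : ∃ i, i ≠ k ∧ h i ≠ 0
    · obtain ⟨i1, hne, hi1⟩ := hrest
      have hsum : h k ^ 2 + h i1 ^ 2 ≤ ∑ i, h i ^ 2 := by
        have := Finset.sum_le_sum_of_subset_of_nonneg
          (Finset.subset_univ ({k, i1} : Finset (Fin n)))
          (fun i _ _ => sq_nonneg (h i))
        rwa [Finset.sum_pair (Ne.symm hne)] at this
      have : 0 < h i1 ^ 2 := by positivity
      nlinarith [sq_nonneg s, div_nonneg (sq_nonneg s) hn'.le]
    · push_neg at hrest
      have hk0 : h k ≠ 0 := by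
        intro hk0
        apply hh
        funext i
        by_cases hik : i = k
        · rw [hik]; exact hk0
        · exact hrest i hik
      have hS2 : ∑ i, h i ^ 2 = h k ^ 2 := by
        refine Finset.sum_eq_single k (fun i _ hik => ?_) (by simp)
        rw [hrest i hik]; ring
      have hsk : s = h k := by
        refine Finset.sum_eq_single k (fun i _ hik => hrest i hik) (by simp)
      rw [hS2, hsk]
      have h1 : 0 < h k ^ 2 := by positivity
      have h2 : 0 < h k ^ 2 / n := by positivity
      linarith
  · rw [if_neg hj]
    have hCS : s ^ 2 ≤ (n : ℝ) * ∑ i, h i ^ 2 := by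
      have := sq_sum_le_card_mul_sum_sq (s := (Finset.univ : Finset (Fin n))) (f := h)
      simpa using this
    have hsq : ((1 / Real.sqrt n) * s) ^ 2 = s ^ 2 / n := by
      rw [mul_pow, one_div, inv_pow, Real.sq_sqrt hn'.le]
      ring
    rw [hsq]
    have h1 : s ^ 2 / n ≤ ∑ i, h i ^ 2 := by
      rw [div_le_iff₀ hn']
      nlinarith [hCS]
    linarith

theorem BbarTwo_one_resilient {n : ℕ} (hn : 1 ≤ n) (j : Fin (2 * n + 1)) :
    (∀ h : Fin n → ℝ, eNorm h = 1 →
      |(fun i => BbarTwo n i j) ⬝ᵥ h| <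
        eNorm (((BbarTwo n).submatrix id j.succAbove)ᵀ.mulVec h)) ∧
    ((BbarTwo n).submatrix id j.succAbove *
        ((BbarTwo n).submatrix id j.succAbove)ᵀ -
      vecMulVec (fun i => BbarTwo n i j) (fun i => BbarTwo n i j)).PosDef := by
  have hn0 : 0 < n := hn
  set B : Matrix (Fin n) (Fin (2 * n)) ℝ := (BbarTwo n).submatrix id j.succAbove with hB
  set C : Fin n → ℝ := fun i => BbarTwo n i j with hC
  -- evaluation of the transposed submatrix product
  have hBt : ∀ (h : Fin n → ℝ) (k : Fin (2 * n)),
      (Bᵀ.mulVec h) k = ∑ i, BbarTwo n i (j.succAbove k) * h i := by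
    intro h k
    simp [hB, Matrix.mulVec, dotProduct, Matrix.transpose_apply, Matrix.submatrix_apply]
  -- the main strict inequality on sums of squares
  have hmain : ∀ h : Fin n → ℝ, h ≠ 0 →
      ((fun i => C i) ⬝ᵥ h) ^ 2 < ∑ k, ((Bᵀ.mulVec h) k) ^ 2 := by
    intro h hh
    have hsum : ∑ j' : Fin (2 * n + 1), (∑ i, BbarTwo n i j' * h i) ^ 2
        = (∑ i, BbarTwo n i j * h i) ^ 2
          + ∑ k : Fin (2 * n), (∑ i, BbarTwo n i (j.succAbove k) * h i) ^ 2 :=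
      Fin.sum_univ_succAbove (fun j' => (∑ i, BbarTwo n i j' * h i) ^ 2) j
    have hkey := key_lt n hn0 j h hh
    rw [hsum] at hkey
    have hdp : ((fun i => C i) ⬝ᵥ h) = ∑ i, BbarTwo n i j * h i := by
      simp [dotProduct, hC]
    rw [hdp]
    calc (∑ i, BbarTwo n i j * h i) ^ 2
        < ∑ k : Fin (2 * n), (∑ i, BbarTwo n i (j.succAbove k) * h i) ^ 2 := by linarith
      _ = ∑ k, ((Bᵀ.mulVec h) k) ^ 2 := by
          refine Finset.sum_congr rfl fun k _ => ?_
          rw [hBt h k]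
  constructor
  · intro h hh1
    have hh : h ≠ 0 := by
      intro h0
      rw [h0] at hh1
      simp [eNorm] at hh1
    have hlt := hmain h hh
    have habs : |(fun i => C i) ⬝ᵥ h| = Real.sqrt (((fun i => C i) ⬝ᵥ h) ^ 2) :=
      (Real.sqrt_sq_eq_abs _).symm
    rw [habs, eNorm]
    exact Real.sqrt_lt_sqrt (sq_nonneg _) hlt
  · rw [Matrix.posDef_iff_dotProduct_mulVec]; constructor
    · -- Hermitian
      show (B * Bᵀ - vecMulVec C C)ᴴ = B * Bᵀ - vecMulVec C C
      ext i i'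
      simp only [Matrix.conjTranspose_apply, Matrix.sub_apply, Matrix.mul_apply,
        Matrix.vecMulVec_apply, star_trivial, Matrix.transpose_apply]
      rw [mul_comm (C i') (C i)]
      congr 1
      exact Finset.sum_congr rfl fun k _ => mul_comm _ _
    · intro x hx
      have hquad : star x ⬝ᵥ ((B * Bᵀ - vecMulVec C C) *ᵥ x)
          = (∑ k, ((Bᵀ.mulVec x) k) ^ 2) - ((fun i => C i) ⬝ᵥ x) ^ 2 := by
        have hstar : (star x : Fin n → ℝ) = x := by simp
        rw [hstar, Matrix.sub_mulVec, dotProduct_sub]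
        congr 1
        · rw [← Matrix.mulVec_mulVec, Matrix.dotProduct_mulVec, ← Matrix.mulVec_transpose]
          simp [dotProduct, sq]
        · have : (vecMulVec C C *ᵥ x) = fun i => C i * (C ⬝ᵥ x) := by
            funext i
            simp [Matrix.mulVec, Matrix.vecMulVec_apply, dotProduct, Finset.mul_sum,
              mul_assoc]
          rw [this]
          simp only [dotProduct]
          rw [sq]
          simp_rw [← mul_assoc]
          rw [← Finset.sum_mul]
          congr 1
          exact Finset.sum_congr rfl fun i _ => mul_comm _ _
      rw [hquad]
      have := hmain x hx
      linarith
end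

section
/- Let V ∈ ℝ^{n×m} with m ≥ 2n + 1, suppose V has orthonormal rows (VVᵀ = I_n) and that all columns of V have the same Euclidean norm. Then for every column C of V, the matrix I_n − 2CCᵀ is positive definite (equivalently, removing any single column leaves B with BBᵀ − CCᵀ ≻ 0); hence V is 1-resilient. -/
open Matrix

theorem orthonormal_rows_equal_columns_one_resilient {n m : ℕ}
    (V : Matrix (Fin n) (Fin m) ℝ) (hm : 2 * n + 1 ≤ m) (hV : V * Vᵀ = 1)
    (hcol : ∀ j k : Fin m, eNorm (fun i => V i j) = eNorm (fun i => V i k)) :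
    ∀ j : Fin m, ((1 : Matrix (Fin n) (Fin n) ℝ) -
      (2 : ℝ) • vecMulVec (fun i => V i j) (fun i => V i j)).PosDef := by
  intro j
  set c : Fin n → ℝ := fun i => V i j with hc
  set s : ℝ := ∑ i, (c i) ^ 2 with hsdef
  have hcols : ∀ k : Fin m, ∑ i, (V i k) ^ 2 = s := by
    intro k
    have h1 : Real.sqrt (∑ i, (V i k) ^ 2) = Real.sqrt s := hcol k j
    have h2 := congrArg (· ^ 2) h1
    simpa [Real.sq_sqrt (Finset.sum_nonneg fun i _ => sq_nonneg _),
      Real.sq_sqrt (show (0:ℝ) ≤ s from Finset.sum_nonneg fun i _ => sq_nonneg (c i))] using h2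
  have htr : (m : ℝ) * s = n := by
    have h1 : ∑ k : Fin m, ∑ i : Fin n, (V i k) ^ 2 = (n : ℝ) := by
      rw [Finset.sum_comm]
      have h2 : ∀ i : Fin n, ∑ k, (V i k) ^ 2 = 1 := by
        intro i
        have := congrFun (congrFun hV i) i
        simpa [Matrix.mul_apply, Matrix.one_apply, pow_two] using this
      simp [h2]
    rw [← h1]
    simp [hcols, mul_comm]
  have hmpos : 0 < (m : ℝ) := by
    have : 0 < m := lt_of_lt_of_le (Nat.succ_pos _) hm
    exact_mod_cast this
  have h2s : 2 * s < 1 := by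
    have hcast : (2 * n + 1 : ℝ) ≤ m := by exact_mod_cast hm
    nlinarith [htr, hmpos, hcast]
  rw [Matrix.posDef_iff_dotProduct_mulVec]
  constructor
  · -- Hermitian
    ext i k
    simp [Matrix.conjTranspose_apply, Matrix.vecMulVec_apply, Matrix.one_apply,
      mul_comm, eq_comm]
  · intro x hx
    have hmv : Matrix.vecMulVec c c *ᵥ x = fun i => c i * (∑ k, c k * x k) := by
      ext i
      simp [Matrix.mulVec, dotProduct, Matrix.vecMulVec_apply, Finset.mul_sum,
        mul_assoc]
    have hform : dotProduct (star x) (((1 : Matrix (Fin n) (Fin n) ℝ) -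
        (2 : ℝ) • vecMulVec c c) *ᵥ x)
        = (∑ i, (x i) ^ 2) - 2 * (∑ i, c i * x i) ^ 2 := by
      rw [Matrix.sub_mulVec, Matrix.one_mulVec, Matrix.smul_mulVec, hmv]
      simp only [star_trivial, dotProduct_sub, dotProduct_smul, smul_eq_mul]
      congr 1
      · simp [dotProduct, pow_two]
      · rw [pow_two]
        congr 1
        simp only [dotProduct]
        rw [Finset.sum_mul]
        apply Finset.sum_congr rfl
        intro i _
        ring
    rw [hform]
    have hcs : (∑ i, c i * x i) ^ 2 ≤ s * ∑ i, (x i) ^ 2 :=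
      Finset.sum_mul_sq_le_sq_mul_sq Finset.univ c x
    have hxpos : 0 < ∑ i, (x i) ^ 2 := by
      obtain ⟨i, hi⟩ := Function.ne_iff.mp hx
      exact Finset.sum_pos' (fun k _ => sq_nonneg _)
        ⟨i, Finset.mem_univ i, pow_two_pos_of_ne_zero hi⟩
    have hs0 : 0 ≤ s := Finset.sum_nonneg fun i _ => sq_nonneg _
    nlinarith [hcs, hxpos, h2s, hs0]
end

section
/- Let n, p ∈ ℕ with n, p ≥ 1, and let B̄_{2p} = [I_n I_n … I_n D] ∈ ℝ^{n×(2pn+1)} consist of 2p copies of the identity matrix I_n followed by the column D = (1/√n)·(1, …, 1)ᵀ ∈ ℝⁿ. Then for every choice of p pairwise distinct columns of B̄_{2p}, letting C ∈ ℝ^{n×p} be the matrix of those columns and B the matrix of the remaining columns, one has ‖Cᵀh‖ < ‖Bᵀh‖ for every unit vector h ∈ ℝⁿ (equivalently BBᵀ − CCᵀ ≻ 0); hence B̄_{2p} is p-resilient. -/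
open Matrix

/-- The `n × (2pn+1)` control matrix `[Iₙ … Iₙ D]` made of `2p` copies of the identity
followed by the column `D = (1/√n)(1,…,1)ᵀ`: column `j < 2pn` is `e_{j mod n}`. -/
noncomputable def BbarCopies (n p : ℕ) : Matrix (Fin n) (Fin (2 * p * n + 1)) ℝ :=
  Matrix.of fun i j =>
    if j.val < 2 * p * n then (if i.val = j.val % n then 1 else 0)
    else 1 / Real.sqrt n

private lemma sum_range_mul_mod (h : ℕ → ℝ) (n m : ℕ) :
    ∑ j ∈ Finset.range (m * n), h (j % n) = m * ∑ i ∈ Finset.range n, h i := by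
  induction m with
  | zero => simp
  | succ m ih =>
    have e : (m + 1) * n = m * n + n := by ring
    rw [e, Finset.sum_range_add, ih]
    have hcong : ∀ i ∈ Finset.range n, h ((m * n + i) % n) = h i := by
      intro i hi
      rw [add_comm, Nat.add_mul_mod_self_right, Nat.mod_eq_of_lt (Finset.mem_range.mp hi)]
    rw [Finset.sum_congr rfl hcong]
    push_cast
    ring

theorem BbarCopies_p_resilient {n p : ℕ} (hn : 1 ≤ n) (hp : 1 ≤ p)
    (f : Fin p → Fin (2 * p * n + 1)) (hf : Function.Injective f) :
    (BbarCopies n p * (BbarCopies n p)ᵀ -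
      (2 : ℝ) • ((BbarCopies n p).submatrix id f *
        ((BbarCopies n p).submatrix id f)ᵀ)).PosDef := by
  have hn0 : 0 < n := hn
  have hnR : (0 : ℝ) < n := by exact_mod_cast hn0
  set M := BbarCopies n p with hMdef
  set C := M.submatrix id f with hCdef
  refine posDef_iff_dotProduct_mulVec.mpr ⟨?_, ?_⟩
  · -- Hermitian
    have h1 : (M * Mᵀ).IsHermitian := by
      have := Matrix.isHermitian_mul_conjTranspose_self M
      simpa using this
    have h2 : (C * Cᵀ).IsHermitian := by
      have := Matrix.isHermitian_mul_conjTranspose_self C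
      simpa using this
    have h3 : ((2 : ℝ) • (C * Cᵀ)).IsHermitian := by
      show _ᴴ = _
      rw [conjTranspose_smul, star_trivial, h2]
    exact h1.sub h3
  · intro x hx
    have keyAA : ∀ (m : ℕ) (A : Matrix (Fin n) (Fin m) ℝ),
        x ⬝ᵥ ((A * Aᵀ) *ᵥ x) = ∑ j, (Aᵀ *ᵥ x) j ^ 2 := by
      intro m A
      rw [← mulVec_mulVec, dotProduct_mulVec, ← mulVec_transpose]
      simp [dotProduct, pow_two]
    set G : Fin (2 * p * n + 1) → ℝ := Mᵀ *ᵥ x with hGdef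
    set t : ℝ := ∑ i, x i ^ 2 with htdef
    set S : ℝ := ∑ i, x i with hSdef
    -- the quadratic form
    have hquad : star x ⬝ᵥ ((M * Mᵀ - (2 : ℝ) • (C * Cᵀ)) *ᵥ x)
        = ∑ j, G j ^ 2 - 2 * ∑ k, G (f k) ^ 2 := by
      rw [star_trivial, sub_mulVec, dotProduct_sub, smul_mulVec, dotProduct_smul,
        smul_eq_mul, keyAA _ M, keyAA _ C]
      rfl
    -- auxiliary total function
    set y : ℕ → ℝ := fun k => if h : k < n then x ⟨k, h⟩ else 0 with hydef
    -- explicit form of G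
    have hG : ∀ j : Fin (2 * p * n + 1),
        G j = if j.val < 2 * p * n then y (j.val % n) else S / Real.sqrt n := by
      intro j
      by_cases hj : j.val < 2 * p * n
      · rw [if_pos hj]
        show ∑ i, Mᵀ j i * x i = _
        have hstep : ∀ i : Fin n, Mᵀ j i * x i
            = if (⟨j.val % n, Nat.mod_lt _ hn0⟩ : Fin n) = i then x i else 0 := by
          intro i
          simp only [transpose_apply, hMdef, BbarCopies, of_apply, hj, if_pos]
          by_cases h : (i : ℕ) = j.val % n
          · rw [if_pos h, if_pos (Fin.ext h.symm), one_mul]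
          · rw [if_neg h, if_neg (fun hh => h (by rw [← hh])), zero_mul]
        rw [Finset.sum_congr rfl fun i _ => hstep i, Finset.sum_ite_eq]
        simp only [Finset.mem_univ, if_pos, hydef]
        rw [dif_pos (Nat.mod_lt _ hn0)]
      · rw [if_neg hj]
        show ∑ i, Mᵀ j i * x i = _
        have hstep : ∀ i : Fin n, Mᵀ j i * x i = x i * (1 / Real.sqrt n) := by
          intro i
          simp only [transpose_apply, hMdef, BbarCopies, of_apply, hj, if_false]
          ring
        rw [Finset.sum_congr rfl fun i _ => hstep i, ← Finset.sum_mul, hSdef]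
        ring
    -- basic positivity facts
    have ht : 0 < t := by
      obtain ⟨i, hi⟩ := Function.ne_iff.mp hx
      exact Finset.sum_pos' (fun i _ => sq_nonneg _)
        ⟨i, Finset.mem_univ i, lt_of_le_of_ne (sq_nonneg _) (Ne.symm (pow_ne_zero 2 hi))⟩
    have hsq_le : ∀ i, x i ^ 2 ≤ t := fun i =>
      Finset.single_le_sum (fun i _ => sq_nonneg (x i)) (Finset.mem_univ i)
    have hpairs : ∀ i j : Fin n, i ≠ j → x i ^ 2 + x j ^ 2 ≤ t := by
      intro i j hij
      calc x i ^ 2 + x j ^ 2 = ∑ k ∈ ({i, j} : Finset (Fin n)), x k ^ 2 :=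
            (Finset.sum_pair (f := fun k => x k ^ 2) hij).symm
        _ ≤ t := Finset.sum_le_sum_of_subset_of_nonneg (Finset.subset_univ _)
            (fun k _ _ => sq_nonneg _)
    have hCS : S ^ 2 ≤ n * t := by
      have h := Finset.sum_mul_sq_le_sq_mul_sq Finset.univ (fun _ : Fin n => (1 : ℝ)) x
      simpa [htdef, hSdef, Finset.card_univ] using h
    have hSn : S ^ 2 / n ≤ t := by
      rw [div_le_iff₀ hnR]; linarith
    have hSn0 : 0 ≤ S ^ 2 / n := by positivity
    have hysq : ∀ k : ℕ, (hk : k < n) → y k ^ 2 = x ⟨k, hk⟩ ^ 2 := by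
      intro k hk
      simp only [hydef]
      rw [dif_pos hk]
    have hyle : ∀ k : ℕ, y k ^ 2 ≤ t := by
      intro k
      by_cases hk : k < n
      · rw [hysq k hk]; exact hsq_le _
      · simp only [hydef]; rw [dif_neg hk]; simpa using ht.le
    -- value squared of the last column
    have hlast : (S / Real.sqrt n) ^ 2 = S ^ 2 / n := by
      rw [div_pow, Real.sq_sqrt hnR.le]
    -- total sum of squares
    have hyt : ∑ i ∈ Finset.range n, y i ^ 2 = t := by
      rw [← Fin.sum_univ_eq_sum_range (fun k => y k ^ 2) n]
      show _ = ∑ i, x i ^ 2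
      apply Finset.sum_congr rfl
      intro i _
      rw [hysq _ i.isLt]
    have hT : ∑ j, G j ^ 2 = 2 * p * t + S ^ 2 / n := by
      rw [Fin.sum_univ_castSucc]
      have hlastval : ¬ ((Fin.last (2 * p * n)).val < 2 * p * n) := by simp
      have h2 : G (Fin.last (2 * p * n)) ^ 2 = S ^ 2 / n := by
        rw [hG, if_neg hlastval, hlast]
      have h1 : ∑ j : Fin (2 * p * n), G j.castSucc ^ 2 = 2 * p * t := by
        calc ∑ j : Fin (2 * p * n), G j.castSucc ^ 2
            = ∑ j : Fin (2 * p * n), y ((j : ℕ) % n) ^ 2 := by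
              apply Finset.sum_congr rfl
              intro j _
              rw [hG, if_pos (by simpa using j.isLt)]
              simp
          _ = ∑ j ∈ Finset.range (2 * p * n), y (j % n) ^ 2 :=
              Fin.sum_univ_eq_sum_range (fun k => y (k % n) ^ 2) (2 * p * n)
          _ = ((2 * p : ℕ) : ℝ) * ∑ i ∈ Finset.range n, y i ^ 2 :=
              sum_range_mul_mod (fun k => y k ^ 2) n (2 * p)
          _ = 2 * p * t := by rw [hyt]; push_cast; ring
      rw [h1, h2]
    rw [hquad, hT]
    by_cases hA : ∃ k0, ¬ ((f k0).val < 2 * p * n)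
    · -- the column D is among the removed ones
      obtain ⟨k0, hk0⟩ := hA
      have hrest : ∀ k, k ≠ k0 → (f k).val < 2 * p * n := by
        intro k hk
        by_contra hlt
        have h1 : (f k).val = 2 * p * n := by omega
        have h2 : (f k0).val = 2 * p * n := by omega
        exact hk (hf (Fin.ext (by rw [h1, h2])))
      have hk0G : G (f k0) ^ 2 = S ^ 2 / n := by rw [hG, if_neg hk0, hlast]
      have hsplit : ∑ k, G (f k) ^ 2
          = G (f k0) ^ 2 + ∑ k ∈ Finset.univ.erase k0, G (f k) ^ 2 :=
        (Finset.add_sum_erase _ _ (Finset.mem_univ k0)).symm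
      have hbound : ∑ k ∈ Finset.univ.erase k0, G (f k) ^ 2 ≤ (p : ℝ) * t - t := by
        have hle : ∀ k ∈ Finset.univ.erase k0, G (f k) ^ 2 ≤ t := by
          intro k hk
          have hk' := hrest k (Finset.ne_of_mem_erase hk)
          rw [hG, if_pos hk']
          exact hyle _
        calc ∑ k ∈ Finset.univ.erase k0, G (f k) ^ 2
            ≤ (Finset.univ.erase k0).card • t := Finset.sum_le_card_nsmul _ _ _ hle
          _ = (p : ℝ) * t - t := by
              rw [Finset.card_erase_of_mem (Finset.mem_univ k0), Finset.card_univ,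
                Fintype.card_fin, nsmul_eq_mul, Nat.cast_sub hp]
              push_cast
              ring
      rw [hsplit, hk0G]
      linarith [hSn, ht, hbound]
    · -- all removed columns are identity columns
      push_neg at hA
      set J : Fin p → Fin n := fun k => ⟨(f k).val % n, Nat.mod_lt _ hn0⟩ with hJdef
      have hGk : ∀ k, G (f k) ^ 2 = x (J k) ^ 2 := by
        intro k
        rw [hG, if_pos (hA k), hysq _ (Nat.mod_lt _ hn0)]
      rw [Finset.sum_congr rfl fun k _ => hGk k]
      set R : ℝ := ∑ k, (t - x (J k) ^ 2) with hRdef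
      have hR0 : 0 ≤ R := Finset.sum_nonneg fun k _ => by linarith [hsq_le (J k)]
      have hQR : ∑ k, x (J k) ^ 2 = (p : ℝ) * t - R := by
        rw [hRdef, Finset.sum_sub_distrib, Finset.sum_const, Finset.card_univ,
          Fintype.card_fin, nsmul_eq_mul]
        ring
      rw [hQR]
      have key : 0 < S ^ 2 / n + 2 * R := by
        by_cases hB : ∃ k1 k2, J k1 ≠ J k2
        · obtain ⟨k1, k2, hk12⟩ := hB
          have hkk : k1 ≠ k2 := fun h => hk12 (by rw [h])
          have hRt : t ≤ R := by
            have hsub : ∑ k ∈ ({k1, k2} : Finset (Fin p)), (t - x (J k) ^ 2) ≤ R :=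
              Finset.sum_le_sum_of_subset_of_nonneg (Finset.subset_univ _)
                (fun k _ _ => by linarith [hsq_le (J k)])
            rw [Finset.sum_pair (f := fun k => t - x (J k) ^ 2) hkk] at hsub
            have := hpairs (J k1) (J k2) hk12
            linarith
          linarith
        · push_neg at hB
          set k0 : Fin p := ⟨0, hp⟩ with hk0def
          set j : Fin n := J k0 with hjdef
          by_cases hz : ∀ i, i ≠ j → x i = 0
          · -- x is supported on coordinate j
            have hSx : S = x j := by
              rw [hSdef]
              exact Finset.sum_eq_single j (fun i _ hi => hz i hi)
                (fun h => absurd (Finset.mem_univ j) h)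
            have htx : t = x j ^ 2 := by
              rw [htdef]
              exact Finset.sum_eq_single j (fun i _ hi => by rw [hz i hi]; ring)
                (fun h => absurd (Finset.mem_univ j) h)
            have hxj : x j ≠ 0 := by
              intro h0
              rw [htx, h0] at ht
              simp at ht
            have hpos : 0 < S ^ 2 / n := by
              rw [hSx]
              exact div_pos (lt_of_le_of_ne (sq_nonneg _) (Ne.symm (pow_ne_zero 2 hxj))) hnR
            linarith
          · push_neg at hz
            obtain ⟨i, hij, hxi⟩ := hz
            have hRpos : 0 < R := by
              have h1 : t - x (J k0) ^ 2 ≤ R :=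
                Finset.single_le_sum (f := fun k => t - x (J k) ^ 2)
                  (fun k _ => by show (0:ℝ) ≤ t - x (J k) ^ 2; linarith [hsq_le (J k)])
                  (Finset.mem_univ k0)
              have h2 := hpairs i j hij
              have h3 : 0 < x i ^ 2 :=
                lt_of_le_of_ne (sq_nonneg _) (Ne.symm (pow_ne_zero 2 hxi))
              rw [← hjdef] at h1
              linarith
            linarith
      linarith [key]
end

section
/- Let V ∈ ℝ^{n×m} with m ≥ 4n + 1, suppose V has orthonormal rows (VVᵀ = I_n), that all columns of V have the same Euclidean norm, and that at least two columns of V are collinear. Then for every choice of two distinct columns C₁, C₂ of V, the matrix I_n − 2(C₁C₁ᵀ + C₂C₂ᵀ) is positive definite (equivalently, removing any two columns leaves B with BBᵀ − CCᵀ ≻ 0); hence V is 2-resilient. -/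
open Matrix

private lemma vmv_mulVec {n : ℕ} (u x : Fin n → ℝ) :
    vecMulVec u u *ᵥ x = (u ⬝ᵥ x) • u := by
  ext a
  simp only [Matrix.mulVec, dotProduct, Matrix.vecMulVec_apply, Pi.smul_apply,
    smul_eq_mul, Finset.sum_mul]
  exact Finset.sum_congr rfl fun b _ => by ring

theorem orthonormal_rows_equal_columns_two_resilient {n m : ℕ}
    (V : Matrix (Fin n) (Fin m) ℝ) (hm : 4 * n + 1 ≤ m) (hV : V * Vᵀ = 1)
    (hcol : ∀ j k : Fin m, eNorm (fun i => V i j) = eNorm (fun i => V i k))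
    (hcollin : ∃ j k : Fin m, j ≠ k ∧ ∃ c : ℝ,
      ((fun i => V i k) = c • (fun i => V i j) ∨ (fun i => V i j) = c • (fun i => V i k))) :
    ∀ j k : Fin m, j ≠ k →
      ((1 : Matrix (Fin n) (Fin n) ℝ) -
        (2 : ℝ) • (vecMulVec (fun i => V i j) (fun i => V i j) +
          vecMulVec (fun i => V i k) (fun i => V i k))).PosDef := by
  intro j k hjk
  have hm0 : 0 < m := by omega
  set s : Fin m → ℝ := fun t => ∑ i, (V i t) ^ 2 with hsdef
  have hsnn : ∀ t, 0 ≤ s t := fun t => Finset.sum_nonneg fun i _ => sq_nonneg _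
  have hseq : ∀ a b : Fin m, s a = s b := by
    intro a b
    have h := hcol a b
    unfold eNorm at h
    exact (Real.sqrt_inj (hsnn a) (hsnn b)).mp h
  have hdiag : ∀ i : Fin n, ∑ t, (V i t) ^ 2 = 1 := by
    intro i
    have h := congrFun (congrFun hV i) i
    simpa [Matrix.mul_apply, Matrix.one_apply, pow_two] using h
  have hsum : ∑ t, s t = (n : ℝ) := by
    rw [hsdef]
    rw [Finset.sum_comm]
    simp [hdiag]
  have hval : ∀ t, s t = (n : ℝ) / m := by
    intro t
    have h1 : (m : ℝ) * s t = n := by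
      calc (m : ℝ) * s t = ∑ _u : Fin m, s t := by
            simp [Finset.sum_const, mul_comm]
        _ = ∑ u : Fin m, s u := Finset.sum_congr rfl fun u _ => hseq t u
        _ = n := hsum
    have hmne : (m : ℝ) ≠ 0 := by positivity
    field_simp
    linarith [h1]
  refine Matrix.PosDef.of_dotProduct_mulVec_pos ?_ ?_
  · -- Hermitian
    unfold Matrix.IsHermitian
    ext a b
    simp only [Matrix.conjTranspose_apply, Matrix.sub_apply, Matrix.smul_apply,
      Matrix.add_apply, Matrix.vecMulVec_apply, Matrix.one_apply, star_trivial,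
      smul_eq_mul]
    have hif : (if b = a then (1:ℝ) else 0) = (if a = b then 1 else 0) := by
      simp [eq_comm]
    rw [hif]
    ring
  · intro x hx
    have hX : 0 < ∑ i, (x i) ^ 2 := by
      have : ∃ i, x i ≠ 0 := by
        by_contra h
        push_neg at h
        exact hx (funext h)
      obtain ⟨i, hi⟩ := this
      exact Finset.sum_pos' (fun t _ => sq_nonneg _) ⟨i, Finset.mem_univ i, by positivity⟩
    have key : star x ⬝ᵥ (((1 : Matrix (Fin n) (Fin n) ℝ) -
        (2 : ℝ) • (vecMulVec (fun i => V i j) (fun i => V i j) +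
          vecMulVec (fun i => V i k) (fun i => V i k))) *ᵥ x) =
        (∑ i, (x i) ^ 2) -
          2 * (((fun i => V i j) ⬝ᵥ x) ^ 2 + ((fun i => V i k) ⬝ᵥ x) ^ 2) := by
      rw [Matrix.sub_mulVec, Matrix.one_mulVec, Matrix.smul_mulVec,
        Matrix.add_mulVec, vmv_mulVec, vmv_mulVec]
      simp only [star_trivial, dotProduct_sub, dotProduct_smul,
        dotProduct_add, smul_eq_mul]
      have hxx : x ⬝ᵥ x = ∑ i, (x i) ^ 2 := by
        simp [dotProduct, pow_two]
      rw [hxx, dotProduct_comm x (fun i => V i j),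
        dotProduct_comm x (fun i => V i k)]
      ring
    rw [key]
    have hcsj : ((fun i => V i j) ⬝ᵥ x) ^ 2 ≤ ((n : ℝ) / m) * ∑ i, (x i) ^ 2 := by
      have := Finset.sum_mul_sq_le_sq_mul_sq Finset.univ (fun i => V i j) x
      calc ((fun i => V i j) ⬝ᵥ x) ^ 2 = (∑ i, V i j * x i) ^ 2 := rfl
        _ ≤ (∑ i, (V i j) ^ 2) * ∑ i, (x i) ^ 2 := this
        _ = ((n : ℝ) / m) * ∑ i, (x i) ^ 2 := by rw [← hval j]
    have hcsk : ((fun i => V i k) ⬝ᵥ x) ^ 2 ≤ ((n : ℝ) / m) * ∑ i, (x i) ^ 2 := by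
      have := Finset.sum_mul_sq_le_sq_mul_sq Finset.univ (fun i => V i k) x
      calc ((fun i => V i k) ⬝ᵥ x) ^ 2 = (∑ i, V i k * x i) ^ 2 := rfl
        _ ≤ (∑ i, (V i k) ^ 2) * ∑ i, (x i) ^ 2 := this
        _ = ((n : ℝ) / m) * ∑ i, (x i) ^ 2 := by rw [← hval k]
    have hfrac : 4 * ((n : ℝ) / m) < 1 := by
      rw [← mul_div_assoc, div_lt_one (by positivity)]
      have : (4 * n : ℝ) + 1 ≤ m := by exact_mod_cast hm
      linarith
    nlinarith [hX, hcsj, hcsk, hfrac]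
end

section
/- Let B ∈ ℝ^{n×(m−p)} and C ∈ ℝ^{n×p} with F := BBᵀ − CCᵀ positive definite. Then BBᵀ is invertible, the matrix Cᵀ(BBᵀ)⁻¹C is symmetric positive semidefinite, and every eigenvalue λ of Cᵀ(BBᵀ)⁻¹C satisfies 0 ≤ λ < 1; in particular I_p − Cᵀ(BBᵀ)⁻¹C is positive definite. -/
open Matrix

private lemma dotProduct_self_nonneg' {p : ℕ} (v : Fin p → ℝ) : 0 ≤ v ⬝ᵥ v :=
  Finset.sum_nonneg fun _ _ => mul_self_nonneg _

theorem eigenvalues_CtPC_lt_one {n m p : ℕ} (B : Matrix (Fin n) (Fin (m - p)) ℝ)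
    (C : Matrix (Fin n) (Fin p) ℝ) (hF : (B * Bᵀ - C * Cᵀ).PosDef) :
    IsUnit (B * Bᵀ) ∧
    (Cᵀ * (B * Bᵀ)⁻¹ * C).PosSemidef ∧
    (∀ μ : ℝ, Module.End.HasEigenvalue
        (Matrix.toLin' (Cᵀ * (B * Bᵀ)⁻¹ * C)) μ → 0 ≤ μ ∧ μ < 1) ∧
    ((1 : Matrix (Fin p) (Fin p) ℝ) - Cᵀ * (B * Bᵀ)⁻¹ * C).PosDef := by
  have hCt : Cᵀ = Cᴴ := by
    ext i j; simp [conjTranspose_apply]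
  have hCC : (C * Cᵀ).PosSemidef := by
    rw [hCt]; exact posSemidef_self_mul_conjTranspose C
  have hM : (B * Bᵀ).PosDef := by
    have := hF.add_posSemidef hCC
    simpa using this
  have hMinv : (B * Bᵀ)⁻¹.PosDef := hM.inv
  have hK : (Cᵀ * (B * Bᵀ)⁻¹ * C).PosSemidef := by
    have := hMinv.posSemidef.mul_mul_conjTranspose_same Cᴴ
    simpa [← hCt, Matrix.mul_assoc] using this
  set M := B * Bᵀ with hMdef
  set K := Cᵀ * M⁻¹ * C with hKdef
  -- key inequality: for x ≠ 0, x ⬝ᵥ K *ᵥ x < x ⬝ᵥ x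
  have key : ∀ x : Fin p → ℝ, x ≠ 0 → x ⬝ᵥ K *ᵥ x < x ⬝ᵥ x := by
    intro x hx
    set y : Fin n → ℝ := M⁻¹ *ᵥ (C *ᵥ x) with hy
    have hMy : M *ᵥ y = C *ᵥ x := by
      rw [hy, mulVec_mulVec, Matrix.mul_nonsing_inv _ (isUnit_iff_isUnit_det _ |>.1 hM.isUnit), one_mulVec]
    have ht : x ⬝ᵥ K *ᵥ x = (C *ᵥ x) ⬝ᵥ y := by
      rw [hKdef, ← mulVec_mulVec, ← mulVec_mulVec, dotProduct_mulVec, vecMul_transpose]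
    set t := x ⬝ᵥ K *ᵥ x with htdef
    have hyMy : y ⬝ᵥ M *ᵥ y = t := by rw [hMy, ht, dotProduct_comm]
    have hsq : 0 ≤ (Cᵀ *ᵥ y - x) ⬝ᵥ (Cᵀ *ᵥ y - x) := dotProduct_self_nonneg' _
    have hexp : (Cᵀ *ᵥ y - x) ⬝ᵥ (Cᵀ *ᵥ y - x)
        = y ⬝ᵥ (C * Cᵀ) *ᵥ y - 2 * t + x ⬝ᵥ x := by
      have h1 : (Cᵀ *ᵥ y) ⬝ᵥ (Cᵀ *ᵥ y) = y ⬝ᵥ (C * Cᵀ) *ᵥ y := by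
        rw [← mulVec_mulVec, mulVec_transpose, dotProduct_mulVec]
      have h2 : x ⬝ᵥ (Cᵀ *ᵥ y) = t := by
        rw [dotProduct_mulVec, vecMul_transpose, ← ht]
      have h3 : (Cᵀ *ᵥ y) ⬝ᵥ x = t := by rw [dotProduct_comm, h2]
      rw [sub_dotProduct, dotProduct_sub, dotProduct_sub, h1, h2, h3]
      ring
    by_cases hy0 : y = 0
    · have ht0 : x ⬝ᵥ K *ᵥ x = 0 := by
        have h := ht; rw [hy0, dotProduct_zero] at h; exact h
      have ht0' : t = 0 := htdef.trans ht0
      rw [ht0']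
      have : (0:ℝ) < x ⬝ᵥ x := by
        have := dotProduct_self_nonneg' x
        rcases this.lt_or_eq with h | h
        · exact h
        · exact absurd ((dotProduct_self_eq_zero).1 h.symm) hx
      linarith
    · have hFy : 0 < y ⬝ᵥ (M - C * Cᵀ) *ᵥ y := by
        have := hF.dotProduct_mulVec_pos hy0
        simpa using this
      rw [sub_mulVec, dotProduct_sub, hyMy] at hFy
      -- t > y CCᵀ y ≥ 2t - x⬝x
      have : y ⬝ᵥ (C * Cᵀ) *ᵥ y ≥ 2 * t - x ⬝ᵥ x := by linarith [hsq, hexp.symm.le, hexp.le]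
      linarith
  have hIK : ((1 : Matrix (Fin p) (Fin p) ℝ) - K).PosDef := by
    refine posDef_iff_dotProduct_mulVec.mpr ⟨?_, ?_⟩
    · exact (isHermitian_one).sub hK.isHermitian
    · intro x hx
      have := key x hx
      have hstar : star x = x := by simp
      rw [hstar, sub_mulVec, one_mulVec, dotProduct_sub]
      linarith
  refine ⟨hM.isUnit, hK, ?_, hIK⟩
  intro μ hμ
  obtain ⟨v, hv⟩ := hμ.exists_hasEigenvector
  have hv0 : v ≠ 0 := hv.2
  have hKv : K *ᵥ v = μ • v := by
    have := hv.apply_eq_smul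
    simpa [Matrix.toLin'_apply] using this
  have hvv : (0:ℝ) < v ⬝ᵥ v := by
    have := dotProduct_self_nonneg' v
    rcases this.lt_or_eq with h | h
    · exact h
    · exact absurd ((dotProduct_self_eq_zero).1 h.symm) hv0
  have hq : v ⬝ᵥ K *ᵥ v = μ * (v ⬝ᵥ v) := by
    rw [hKv, dotProduct_smul, smul_eq_mul]
  constructor
  · have h0 : 0 ≤ v ⬝ᵥ K *ᵥ v := by
      have := hK.dotProduct_mulVec_nonneg v; simpa using this
    nlinarith
  · have := key v hv0
    nlinarith
end

section
/- Let B ∈ ℝ^{n×(m−p)} and C ∈ ℝ^{n×p} with F := BBᵀ − CCᵀ positive definite, let P := (BBᵀ)⁻¹, let λ_M be the largest eigenvalue of Cᵀ P C (so λ_M < 1), let d ∈ ℝⁿ, let T > 0, and let α > 0 satisfy (α/2)·dᵀPd + √(2α)·‖CᵀPd‖ ≤ 1 − λ_M. Then for every measurable w : [0,T] → ℝᵖ with ∫₀ᵀ‖w(t)‖²dt ≤ 1, the control law u(t) := −Bᵀ(BBᵀ)⁻¹(Cw(t) + α e^{−αt} d) satisfies ∫₀ᵀ‖u(t)‖²dt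 ≤ 1. -/
open MeasureTheory Matrix

lemma eNorm_sq {k : ℕ} (v : Fin k → ℝ) : eNorm v ^ 2 = v ⬝ᵥ v := by
  rw [eNorm, Real.sq_sqrt (Finset.sum_nonneg fun i _ => sq_nonneg _), dotProduct]
  exact Finset.sum_congr rfl fun i _ => by ring

lemma dot_le_eNorm_mul_eNorm {k : ℕ} (a b : Fin k → ℝ) : a ⬝ᵥ b ≤ eNorm a * eNorm b := by
  simpa [dotProduct, eNorm] using Real.sum_mul_le_sqrt_mul_sqrt Finset.univ a b

lemma mulVec_dot {k l : ℕ} (M : Matrix (Fin k) (Fin l) ℝ) (a : Fin l → ℝ) (x : Fin k → ℝ) :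
    (M *ᵥ a) ⬝ᵥ x = a ⬝ᵥ (Mᵀ *ᵥ x) := by
  rw [dotProduct_comm, Matrix.dotProduct_mulVec, ← Matrix.mulVec_transpose,
    dotProduct_comm]

lemma rayleigh_bound {k : ℕ} {A : Matrix (Fin k) (Fin k) ℝ} (hA : A.IsHermitian) {lam : ℝ}
    (hub : ∀ μ, Module.End.HasEigenvalue (Matrix.toLin' A) μ → μ ≤ lam)
    (v : Fin k → ℝ) : v ⬝ᵥ A *ᵥ v ≤ lam * (v ⬝ᵥ v) := by
  classical
  have hev : ∀ j, hA.eigenvalues j ≤ lam := by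
    intro j
    apply hub
    apply Module.End.hasEigenvalue_of_hasEigenvector (x := ⇑(hA.eigenvectorBasis j))
    refine ⟨Module.End.mem_eigenspace_iff.2 ?_, ?_⟩
    · rw [Matrix.toLin'_apply]
      exact hA.mulVec_eigenvectorBasis j
    · intro h
      exact hA.eigenvectorBasis.orthonormal.ne_zero j (by ext i; exact congrFun h i)
  set U : Matrix (Fin k) (Fin k) ℝ := (hA.eigenvectorUnitary : Matrix (Fin k) (Fin k) ℝ) with hUdef
  have hU1 : U * star U = 1 := (Matrix.mem_unitaryGroup_iff).mp hA.eigenvectorUnitary.2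
  set y : Fin k → ℝ := star U *ᵥ v with hy
  have hdot : ∀ x : Fin k → ℝ, v ⬝ᵥ U *ᵥ x = y ⬝ᵥ x := by
    intro x
    rw [Matrix.dotProduct_mulVec, hy]
    congr 1
    rw [← Matrix.mulVec_transpose, Matrix.star_eq_conjTranspose,
      Matrix.conjTranspose_eq_transpose_of_trivial]
  have hvv : v ⬝ᵥ v = y ⬝ᵥ y := by
    have : v ⬝ᵥ U *ᵥ y = y ⬝ᵥ y := hdot y
    rw [← this, hy, Matrix.mulVec_mulVec, hU1, Matrix.one_mulVec]
  have hquad : v ⬝ᵥ A *ᵥ v = ∑ j, hA.eigenvalues j * (y j)^2 := by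
    conv_lhs => rw [hA.spectral_theorem, Unitary.conjStarAlgAut_apply]
    rw [← Matrix.mulVec_mulVec, ← Matrix.mulVec_mulVec, hdot]
    show y ⬝ᵥ (Matrix.diagonal (RCLike.ofReal ∘ hA.eigenvalues)) *ᵥ y = _
    simp only [dotProduct, Matrix.mulVec_diagonal, Function.comp_apply,
      RCLike.ofReal_real_eq_id, id_eq]
    exact Finset.sum_congr rfl fun j _ => by ring
  rw [hquad, hvv]
  have hls : lam * (y ⬝ᵥ y) = ∑ j, lam * (y j ^ 2) := by
    rw [dotProduct, Finset.mul_sum]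
    exact Finset.sum_congr rfl fun j _ => by ring
  rw [hls]
  apply Finset.sum_le_sum
  intro j _
  nlinarith [hev j, sq_nonneg (y j)]

theorem control_law_admissible {n m p : ℕ} (B : Matrix (Fin n) (Fin (m - p)) ℝ)
    (C : Matrix (Fin n) (Fin p) ℝ) (hF : (B * Bᵀ - C * Cᵀ).PosDef)
    (lamM : ℝ)
    (hlam : IsGreatest {μ : ℝ | Module.End.HasEigenvalue
        (Matrix.toLin' (Cᵀ * (B * Bᵀ)⁻¹ * C)) μ} lamM)
    (d : Fin n → ℝ) (T α : ℝ) (hT : 0 < T) (hα : 0 < α)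
    (hcond : α / 2 * (d ⬝ᵥ ((B * Bᵀ)⁻¹.mulVec d))
        + Real.sqrt (2 * α) * eNorm ((Cᵀ * (B * Bᵀ)⁻¹).mulVec d) ≤ 1 - lamM) :
    ∀ w : ℝ → Fin p → ℝ, Measurable w →
      IntegrableOn (fun t => (eNorm (w t)) ^ 2) (Set.Ioc 0 T) →
      (∫ t in Set.Ioc (0 : ℝ) T, (eNorm (w t)) ^ 2) ≤ 1 →
      (∫ t in Set.Ioc (0 : ℝ) T,
          (eNorm (-(Bᵀ * (B * Bᵀ)⁻¹).mulVec
            (C.mulVec (w t) + (α * Real.exp (-(α * t))) • d))) ^ 2) ≤ 1 := by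
  intro w hwm hw2 hwle
  classical
  set P : Matrix (Fin n) (Fin n) ℝ := (B * Bᵀ)⁻¹ with hPdefn
  -- positivity facts
  have hCCt : (C * Cᵀ).PosSemidef := by
    have := Matrix.posSemidef_self_mul_conjTranspose C
    rwa [Matrix.conjTranspose_eq_transpose_of_trivial] at this
  have hBBt : (B * Bᵀ).PosDef := by
    have h := hF.add_posSemidef hCCt
    rwa [sub_add_cancel] at h
  have hP : P.PosDef := hBBt.inv
  have hPsym : Pᵀ = P := by
    have h2 : Pᴴ = P := hP.isHermitian
    rwa [Matrix.conjTranspose_eq_transpose_of_trivial] at h2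
  have hInv : P * (B * Bᵀ) = 1 :=
    Matrix.nonsing_inv_mul _ (isUnit_iff_ne_zero.2 (ne_of_gt hBBt.det_pos))
  set M : Matrix (Fin p) (Fin p) ℝ := Cᵀ * P * C with hMdef
  have hMpsd : M.PosSemidef := by
    have := hP.posSemidef.conjTranspose_mul_mul_same C
    rwa [Matrix.conjTranspose_eq_transpose_of_trivial] at this
  -- lamM is nonnegative
  have hlam0 : 0 ≤ lamM := by
    obtain ⟨x, hx⟩ := hlam.1.exists_hasEigenvector
    have hxx : x ⬝ᵥ x ≠ 0 := fun h => hx.2 ((dotProduct_self_eq_zero).1 h)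
    have hxx' : 0 < x ⬝ᵥ x := lt_of_le_of_ne
      (Finset.sum_nonneg fun i _ => mul_self_nonneg _) (Ne.symm hxx)
    have heq : M *ᵥ x = lamM • x := by
      have := hx.apply_eq_smul
      rwa [Matrix.toLin'_apply] at this
    have hq : 0 ≤ x ⬝ᵥ M *ᵥ x := by
      have := hMpsd.dotProduct_mulVec_nonneg x
      simpa using this
    rw [heq, dotProduct_smul] at hq
    have : 0 ≤ lamM * (x ⬝ᵥ x) := hq
    exact (mul_nonneg_iff_of_pos_right hxx').1 this
  -- abbreviations
  set q : Fin p → ℝ := (Cᵀ * P) *ᵥ d with hqdef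
  set K : ℝ := eNorm q with hKdef
  have hK0 : 0 ≤ K := eNorm_nonneg _
  set D : ℝ := d ⬝ᵥ P *ᵥ d with hDdef
  have hD0 : 0 ≤ D := by simpa using hP.posSemidef.dotProduct_mulVec_nonneg d
  set r : ℝ := Real.sqrt (2 * α) with hrdef
  have hr0 : 0 < r := Real.sqrt_pos.2 (by linarith)
  have hr2 : r ^ 2 = 2 * α := Real.sq_sqrt (by linarith)
  set s : ℝ := r / α with hsdef
  have hs0 : 0 < s := div_pos hr0 hα
  -- matrix identities
  have hMtM : (Bᵀ * P)ᵀ * (Bᵀ * P) = P := by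
    rw [Matrix.transpose_mul, Matrix.transpose_transpose, hPsym, Matrix.mul_assoc,
      ← Matrix.mul_assoc B Bᵀ P, ← Matrix.mul_assoc, hInv, Matrix.one_mul]
  have h1 : ∀ ω : Fin p → ℝ, (C *ᵥ ω) ⬝ᵥ (P *ᵥ (C *ᵥ ω)) = ω ⬝ᵥ M *ᵥ ω := by
    intro ω
    rw [mulVec_dot, Matrix.mulVec_mulVec, Matrix.mulVec_mulVec]
  have h2 : ∀ ω : Fin p → ℝ, (C *ᵥ ω) ⬝ᵥ (P *ᵥ d) = q ⬝ᵥ ω := by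
    intro ω
    rw [mulVec_dot, Matrix.mulVec_mulVec, dotProduct_comm]
  have h3 : ∀ ω : Fin p → ℝ, d ⬝ᵥ (P *ᵥ (C *ᵥ ω)) = q ⬝ᵥ ω := by
    intro ω
    rw [Matrix.dotProduct_mulVec, ← Matrix.mulVec_transpose, hPsym, dotProduct_comm, h2]
  have expand : ∀ (ω : Fin p → ℝ) (g : ℝ),
      (eNorm (-((Bᵀ * P) *ᵥ (C *ᵥ ω + g • d)))) ^ 2
        = ω ⬝ᵥ M *ᵥ ω + 2 * g * (q ⬝ᵥ ω) + g ^ 2 * D := by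
    intro ω g
    rw [eNorm_sq, neg_dotProduct, dotProduct_neg, neg_neg,
      mulVec_dot, Matrix.mulVec_mulVec, hMtM]
    rw [add_dotProduct, Matrix.mulVec_add, Matrix.mulVec_smul,
      dotProduct_add, dotProduct_add, smul_dotProduct,
      dotProduct_smul, dotProduct_smul, smul_dotProduct]
    rw [h1, h2, h3]
    simp only [smul_eq_mul, hDdef]
    ring
  -- pointwise bound
  set c1 : ℝ := lamM + K / s with hc1def
  set c2 : ℝ := (K * s + D) * α ^ 2 with hc2def
  have hc1 : 0 ≤ c1 := add_nonneg hlam0 (div_nonneg hK0 hs0.le)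
  have hc2 : 0 ≤ c2 := mul_nonneg (add_nonneg (mul_nonneg hK0 hs0.le) hD0) (sq_nonneg _)
  have hptw : ∀ t : ℝ,
      (eNorm (-((Bᵀ * P) *ᵥ (C *ᵥ (w t) + (α * Real.exp (-(α * t))) • d)))) ^ 2
        ≤ c1 * eNorm (w t) ^ 2 + c2 * Real.exp (-(2 * α) * t) := by
    intro t
    set g : ℝ := α * Real.exp (-(α * t)) with hgdef
    have hgpos : 0 < g := mul_pos hα (Real.exp_pos _)
    have hg2t : g ^ 2 = α ^ 2 * Real.exp (-(2 * α) * t) := by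
      have hx : Real.exp (-(α * t)) ^ 2 = Real.exp (-(2 * α) * t) := by
        rw [sq, ← Real.exp_add]; congr 1; ring
      rw [hgdef, mul_pow, hx]
    rw [expand]
    have hray : (w t) ⬝ᵥ M *ᵥ (w t) ≤ lamM * eNorm (w t) ^ 2 := by
      rw [eNorm_sq]
      exact rayleigh_bound hMpsd.1 (fun μ h => hlam.2 h) (w t)
    have hcs : q ⬝ᵥ (w t) ≤ K * eNorm (w t) := dot_le_eNorm_mul_eNorm q (w t)
    have hew : 0 ≤ eNorm (w t) := eNorm_nonneg _
    have hgK : 2 * g * (q ⬝ᵥ w t) ≤ K * s * g ^ 2 + K / s * eNorm (w t) ^ 2 := by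
      have ha : 2 * g * (q ⬝ᵥ w t) ≤ 2 * g * (K * eNorm (w t)) :=
        mul_le_mul_of_nonneg_left hcs (by linarith)
      have hiden : K * s * g ^ 2 + K / s * eNorm (w t) ^ 2 - 2 * g * (K * eNorm (w t))
          = K / s * (s * g - eNorm (w t)) ^ 2 := by
        field_simp
        ring
      have hnn : 0 ≤ K / s * (s * g - eNorm (w t)) ^ 2 :=
        mul_nonneg (div_nonneg hK0 hs0.le) (sq_nonneg _)
      linarith
    have hrw : c2 * Real.exp (-(2 * α) * t) = K * s * g ^ 2 + D * g ^ 2 := by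
      rw [hc2def, hg2t]; ring
    rw [hrw, hc1def]
    nlinarith [hray, hgK]
  -- integral of the exponential bound
  have hexpcont : Continuous fun t : ℝ => Real.exp (-(2 * α) * t) :=
    Real.continuous_exp.comp (continuous_const.mul continuous_id)
  have hexpint : IntegrableOn (fun t : ℝ => Real.exp (-(2 * α) * t)) (Set.Ioc 0 T) :=
    hexpcont.integrableOn_Ioc
  have hIE : (∫ t in Set.Ioc (0 : ℝ) T, Real.exp (-(2 * α) * t)) ≤ 1 / (2 * α) := by
    rw [← intervalIntegral.integral_of_le hT.le]
    rw [intervalIntegral.integral_comp_mul_left (fun x => Real.exp x)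
      (show -(2 * α) ≠ 0 by intro h; nlinarith)]
    rw [integral_exp, smul_eq_mul]
    have hXpos : 0 < Real.exp (-(2 * α) * T) := Real.exp_pos _
    have heq : (-(2 * α))⁻¹ * (Real.exp (-(2 * α) * T) - Real.exp (-(2 * α) * 0))
        = (1 - Real.exp (-(2 * α) * T)) / (2 * α) := by
      rw [mul_zero, Real.exp_zero]
      field_simp
      ring
    rw [heq]
    gcongr <;> nlinarith [Real.exp_pos (-(2 * α) * T)]
  -- assemble the integrals
  have hIE0 : (0:ℝ) ≤ ∫ t in Set.Ioc (0 : ℝ) T, Real.exp (-(2 * α) * t) :=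
    integral_nonneg fun t => (Real.exp_pos _).le
  have hIw0 : (0:ℝ) ≤ ∫ t in Set.Ioc (0 : ℝ) T, eNorm (w t) ^ 2 :=
    integral_nonneg fun t => sq_nonneg _
  have hbint : IntegrableOn
      (fun t : ℝ => c1 * eNorm (w t) ^ 2 + c2 * Real.exp (-(2 * α) * t)) (Set.Ioc 0 T) :=
    (hw2.const_mul c1).add (hexpint.const_mul c2)
  have step1 : (∫ t in Set.Ioc (0 : ℝ) T,
          (eNorm (-((Bᵀ * P) *ᵥ (C *ᵥ (w t) + (α * Real.exp (-(α * t))) • d)))) ^ 2)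
      ≤ ∫ t in Set.Ioc (0 : ℝ) T,
          (c1 * eNorm (w t) ^ 2 + c2 * Real.exp (-(2 * α) * t)) :=
    integral_mono_of_nonneg (Filter.Eventually.of_forall fun t => sq_nonneg _)
      hbint (Filter.Eventually.of_forall fun t => hptw t)
  have step2 : (∫ t in Set.Ioc (0 : ℝ) T,
        (c1 * eNorm (w t) ^ 2 + c2 * Real.exp (-(2 * α) * t)))
      = c1 * (∫ t in Set.Ioc (0 : ℝ) T, eNorm (w t) ^ 2)
        + c2 * (∫ t in Set.Ioc (0 : ℝ) T, Real.exp (-(2 * α) * t)) := by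
    rw [integral_add (hw2.const_mul c1) (hexpint.const_mul c2),
      integral_const_mul, integral_const_mul]
  have harith : c1 * 1 + c2 * (1 / (2 * α)) = lamM + r * K + α / 2 * D := by
    rw [hc1def, hc2def, hsdef]
    have hαne : α ≠ 0 := ne_of_gt hα
    have hrne : r ≠ 0 := ne_of_gt hr0
    field_simp
    ring_nf
    linear_combination (-K) * hr2
  have final : c1 * (∫ t in Set.Ioc (0 : ℝ) T, eNorm (w t) ^ 2)
        + c2 * (∫ t in Set.Ioc (0 : ℝ) T, Real.exp (-(2 * α) * t))
      ≤ c1 * 1 + c2 * (1 / (2 * α)) :=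
    add_le_add (mul_le_mul_of_nonneg_left hwle hc1)
      (mul_le_mul_of_nonneg_left hIE hc2)
  calc (∫ t in Set.Ioc (0 : ℝ) T,
          (eNorm (-((Bᵀ * P) *ᵥ (C *ᵥ (w t) + (α * Real.exp (-(α * t))) • d)))) ^ 2)
      ≤ _ := step1
    _ = _ := step2
    _ ≤ c1 * 1 + c2 * (1 / (2 * α)) := final
    _ = lamM + r * K + α / 2 * D := harith
    _ ≤ 1 := by linarith [hcond]
end
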